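/- Let T be a closed densely defined operator between Hilbert spaces H₁ and H₂. Suppose there exist a finite-dimensional subspace K ⊆ H₁ and a constant C > 0 such that C‖ψ‖² ≤ ‖Tψ‖² for all ψ ∈ Dom(T) with ψ ⊥ K. Then the range of T is closed in H₂. -/

import Mathlib

open scoped RealInnerProductSpace

/-- A closed submodule plus a finite-dimensional submodule is closed. -/
theorem aux_closed_sup {X : Type*} [NormedAddCommGroup X] [NormedSpace ℝ X]
    (N F : Submodule ℝ X) (hN : IsClosed (N : Set X)) (hF : FiniteDimensional ℝ F) :
    IsClosed ((N ⊔ F : Submodule ℝ X) : Set X) := by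
  haveI := hN
  have hcont : Continuous N.mkQ := by
    refine AddMonoidHomClass.continuous_of_bound N.mkQ 1 fun x => ?_
    simpa using Submodule.Quotient.norm_mk_le N x
  have hset : ((N ⊔ F : Submodule ℝ X) : Set X)
      = N.mkQ ⁻¹' ((F.map N.mkQ : Submodule ℝ (X ⧸ N)) : Set (X ⧸ N)) := by
    rw [← Submodule.comap_map_mkQ]; rfl
  rw [hset]
  haveI : FiniteDimensional ℝ (F.map N.mkQ) := Module.Finite.map F N.mkQ
  exact (Submodule.closed_of_finiteDimensional _).preimage hcont

/-- A continuous linear map from a Banach space which is bounded below on the kernel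
of a continuous linear map into a finite-dimensional space has closed range. -/
theorem aux_closed_range {E F G : Type*}
    [NormedAddCommGroup E] [NormedSpace ℝ E] [CompleteSpace E]
    [NormedAddCommGroup F] [NormedSpace ℝ F]
    [NormedAddCommGroup G] [NormedSpace ℝ G] [FiniteDimensional ℝ G]
    (L : E →L[ℝ] F) (Q : E →L[ℝ] G) (c : ℝ)
    (hb : ∀ x ∈ LinearMap.ker (Q : E →ₗ[ℝ] G), ‖x‖ ≤ c * ‖L x‖) :
    IsClosed (Set.range L) := by
  set M : Submodule ℝ E := LinearMap.ker (Q : E →ₗ[ℝ] G) with hM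
  have hMclosed : IsClosed (M : Set E) := ContinuousLinearMap.isClosed_ker Q
  haveI : CompleteSpace M := hMclosed.completeSpace_coe
  set f : M →L[ℝ] F := L.comp M.subtypeL with hf
  set c' : NNReal := ⟨max c 0, le_max_right _ _⟩ with hc'
  have hbound : ∀ x : M, ‖x‖ ≤ (c' : ℝ) * ‖f x‖ := by
    intro x
    refine le_trans (hb x x.2) ?_
    exact mul_le_mul_of_nonneg_right (le_max_left _ _) (norm_nonneg _)
  have hanti : AntilipschitzWith c' f :=
    AddMonoidHomClass.antilipschitz_of_bound f hbound
  have hfrange : IsClosed (Set.range f) :=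
    hanti.isClosed_range f.uniformContinuous
  have hrangef : Set.range f = ((M.map (L : E →ₗ[ℝ] F)) : Set F) := by
    ext y
    constructor
    · rintro ⟨x, rfl⟩; exact ⟨x, x.2, rfl⟩
    · rintro ⟨x, hx, rfl⟩; exact ⟨⟨x, hx⟩, rfl⟩
  obtain ⟨W, hWc⟩ := Submodule.exists_isCompl M
  haveI : FiniteDimensional ℝ (E ⧸ M) := by
    have e := (Q : E →ₗ[ℝ] G).quotKerEquivRange
    haveI : FiniteDimensional ℝ (LinearMap.range (Q : E →ₗ[ℝ] G)) := inferInstance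
    exact Module.Finite.equiv e.symm
  haveI : FiniteDimensional ℝ W :=
    Module.Finite.equiv (Submodule.quotientEquivOfIsCompl M W hWc)
  have hrange : Set.range L
      = (((⊤ : Submodule ℝ E).map (L : E →ₗ[ℝ] F)) : Set F) := by
    ext y
    constructor
    · rintro ⟨x, rfl⟩; exact ⟨x, trivial, rfl⟩
    · rintro ⟨x, -, rfl⟩; exact ⟨x, rfl⟩
  rw [hrange, hWc.sup_eq_top.symm, Submodule.map_sup]
  refine aux_closed_sup _ _ ?_ ?_
  · rw [← hrangef]; exact hfrange
  · exact Module.Finite.map W (L : E →ₗ[ℝ] F)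

set_option maxHeartbeats 1000000 in
/-- let `T` be a closed densely defined operator between Hilbert spaces.
If there are a finite-dimensional subspace `K ⊆ H₁` and a constant `C > 0` with
`C‖ψ‖² ≤ ‖Tψ‖²` for all `ψ ∈ Dom(T)` orthogonal to `K`, then the range of `T` is closed. -/
theorem stmt_6 {H₁ H₂ : Type*}
    [NormedAddCommGroup H₁] [InnerProductSpace ℝ H₁] [CompleteSpace H₁]
    [NormedAddCommGroup H₂] [InnerProductSpace ℝ H₂] [CompleteSpace H₂]
    (T : H₁ →ₗ.[ℝ] H₂) (hTc : T.IsClosed) (hTd : Dense (T.domain : Set H₁))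
    (K : Submodule ℝ H₁) (hK : FiniteDimensional ℝ K)
    (C : ℝ) (hC : 0 < C)
    (h : ∀ ψ : T.domain, (∀ k ∈ K, ⟪(ψ : H₁), k⟫ = 0) →
      C * ‖(ψ : H₁)‖ ^ 2 ≤ ‖T ψ‖ ^ 2) :
    IsClosed (Set.range fun ψ : T.domain => T ψ) := by
  classical
  haveI : CompleteSpace T.graph := hTc.completeSpace_coe
  set L : T.graph →L[ℝ] H₂ :=
    (ContinuousLinearMap.snd ℝ H₁ H₂).comp T.graph.subtypeL with hL
  set Q : T.graph →L[ℝ] K :=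
    (K.orthogonalProjectionOnto).comp
      ((ContinuousLinearMap.fst ℝ H₁ H₂).comp T.graph.subtypeL) with hQ
  have hsqrt : 0 < Real.sqrt C := Real.sqrt_pos.2 hC
  have hb : ∀ x ∈ LinearMap.ker (Q : T.graph →ₗ[ℝ] K), ‖x‖ ≤ max (Real.sqrt C)⁻¹ 1 * ‖L x‖ := by
    rintro ⟨p, hp⟩ hx0
    obtain ⟨ψ, hψ1, hψ2⟩ := T.mem_graph_iff.1 hp
    have hker : Q ⟨p, hp⟩ = 0 := hx0
    have hperp : p.1 ∈ Kᗮ := by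
      have : K.orthogonalProjectionOnto p.1 = 0 := hker
      exact Submodule.orthogonalProjectionOnto_eq_zero_iff.1 this
    have horth : ∀ k ∈ K, ⟪(ψ : H₁), k⟫ = 0 := by
      intro k hk
      rw [hψ1]
      exact (Submodule.mem_orthogonal' K p.1).1 hperp k hk
    have hest : C * ‖(ψ : H₁)‖ ^ 2 ≤ ‖T ψ‖ ^ 2 := h ψ horth
    rw [hψ1, hψ2] at hest
    have hLx : L ⟨p, hp⟩ = p.2 := rfl
    have hxnorm : ‖(⟨p, hp⟩ : T.graph)‖ = max ‖p.1‖ ‖p.2‖ := rfl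
    rw [hLx, hxnorm]
    have h1 : ‖p.1‖ ≤ (Real.sqrt C)⁻¹ * ‖p.2‖ := by
      rw [inv_mul_eq_div, le_div_iff₀ hsqrt]
      have hs : (‖p.1‖ * Real.sqrt C) ^ 2 ≤ ‖p.2‖ ^ 2 := by
        rw [mul_pow, Real.sq_sqrt hC.le, mul_comm]; exact hest
      exact (pow_le_pow_iff_left₀ (by positivity) (norm_nonneg _) two_ne_zero).1 hs
    rcases max_cases ‖p.1‖ ‖p.2‖ with ⟨heq, _⟩ | ⟨heq, _⟩ <;> rw [heq]
    · calc ‖p.1‖ ≤ (Real.sqrt C)⁻¹ * ‖p.2‖ := h1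
        _ ≤ max (Real.sqrt C)⁻¹ 1 * ‖p.2‖ := by
            exact mul_le_mul_of_nonneg_right (le_max_left _ _) (norm_nonneg _)
    · calc ‖p.2‖ = 1 * ‖p.2‖ := (one_mul _).symm
        _ ≤ max (Real.sqrt C)⁻¹ 1 * ‖p.2‖ := by
            exact mul_le_mul_of_nonneg_right (le_max_right _ _) (norm_nonneg _)
  have hclosed : IsClosed (Set.range L) := aux_closed_range L Q _ hb
  have hrange : (Set.range fun ψ : T.domain => T ψ) = Set.range L := by
    ext y
    constructor
    · rintro ⟨ψ, rfl⟩
      exact ⟨⟨(↑ψ, T ψ), T.mem_graph ψ⟩, rfl⟩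
    · rintro ⟨⟨p, hp⟩, rfl⟩
      obtain ⟨ψ, hψ1, hψ2⟩ := T.mem_graph_iff.1 hp
      exact ⟨ψ, hψ2⟩
  rw [hrange]
  exact hclosed
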